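/- Define elements ω_k^a recursively in ℤ[x_1,…,x_n] ⊗ Λ(ω_1,…,ω_n) by ω_k^0 = ω_k, ω_0 = 0, and ω_k^a = ω_{k−1}^{a−1} − x_k ω_k^{a−1}. Then ω_k^a = Σ_{ℓ=1}^{k} (−1)^{a+k+ℓ} h_{a+ℓ−k}(x_ℓ,…,x_k) ω_ℓ, where h_j(x_ℓ,…,x_k) is the j-th complete homogeneous symmetric polynomial in the variables x_ℓ,…,x_k (with h_j = 0 for j < 0). -/

import Mathlib

open MvPolynomial

/-- Complete homogeneous symmetric polynomial of degree `d` in the variables `x_i`, `i ∈ s`. -/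
noncomputable def hpoly (s : Finset ℕ) (d : ℕ) : MvPolynomial ℕ ℤ :=
  ∑ m ∈ s.sym d, (m.1.map X).prod

lemma hpoly_zero (s : Finset ℕ) : hpoly s 0 = 1 := by
  simp only [hpoly, Finset.sym_zero, Finset.sum_singleton]
  rfl

lemma hpoly_singleton (a d : ℕ) : hpoly {a} d = X a ^ d := by
  simp [hpoly, Finset.sym_singleton, Sym.replicate]
  exact (Finset.sum_singleton _ _).trans (by
    show (Multiset.map X (Multiset.replicate d a)).prod = _
    simp [Multiset.map_replicate, Multiset.prod_replicate])

lemma hpoly_insert {a : ℕ} {s : Finset ℕ} (ha : a ∉ s) (d : ℕ) :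
    hpoly (insert a s) (d + 1) = hpoly s (d + 1) + X a * hpoly (insert a s) d := by
  classical
  have hsplit := Finset.sum_filter_add_sum_filter_not ((insert a s).sym (d+1))
    (fun m => a ∈ m) (fun m : Sym ℕ (d+1) => ((m.1.map X).prod : MvPolynomial ℕ ℤ))
  have h1 : ((insert a s).sym (d+1)).filter (fun m => a ∈ m)
      = ((insert a s).sym d).image (Sym.cons a) := by
    ext m
    simp only [Finset.mem_filter, Finset.mem_image, Finset.mem_sym_iff]
    constructor
    · rintro ⟨hm, ham⟩
      refine ⟨m.erase a ham, fun b hb => hm b ?_, Sym.cons_erase ham⟩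
      rw [← Sym.cons_erase ham]
      exact Sym.mem_cons_of_mem hb
    · rintro ⟨m', hm', rfl⟩
      refine ⟨fun b hb => ?_, Sym.mem_cons_self _ _⟩
      rcases Sym.mem_cons.1 hb with rfl | hb
      · exact Finset.mem_insert_self _ _
      · exact hm' b hb
  have h2 : ((insert a s).sym (d+1)).filter (fun m => ¬ a ∈ m) = s.sym (d+1) := by
    ext m
    simp only [Finset.mem_filter, Finset.mem_sym_iff, Finset.mem_insert]
    constructor
    · rintro ⟨hm, ham⟩ b hb
      rcases hm b hb with rfl | h
      · exact absurd hb ham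
      · exact h
    · intro hm
      exact ⟨fun b hb => Or.inr (hm b hb), fun ham => ha (hm a ham)⟩
  have h3 : ∑ m ∈ ((insert a s).sym d).image (Sym.cons a), (m.1.map X).prod
      = X a * hpoly (insert a s) d := by
    rw [Finset.sum_image (fun m _ m' _ h => (Sym.cons_inj_right a m m').1 h)]
    rw [hpoly, Finset.mul_sum]
    refine Finset.sum_congr rfl fun m _ => ?_
    simp [Sym.coe_cons]
  rw [hpoly, ← hsplit, h1, h2, h3, add_comm]
  rfl

lemma hpoly_Icc_rec {j k : ℕ} (hj : j ≤ k + 1) (d : ℕ) :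
    hpoly (Finset.Icc j (k+1)) (d+1)
      = hpoly (Finset.Icc j k) (d+1) + X (k+1) * hpoly (Finset.Icc j (k+1)) d := by
  rw [← Finset.insert_Icc_right_eq_Icc_add_one hj, hpoly_insert (by simp)]

/-- The elements `ω_k^a` of the free `ℤ[x_1,x_2,…]`-module with basis `ω_1, ω_2, …`
(coordinates indexed by `ℕ`, 1-based; `ω_0 = 0`), defined by the recursion
`ω_k^0 = ω_k`, `ω_k^a = ω_{k−1}^{a−1} − x_k·ω_k^{a−1}`. -/
noncomputable def Omega : ℕ → ℕ → ℕ → MvPolynomial ℕ ℤ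
  | 0, _ => 0
  | k + 1, 0 => fun j => if j = k + 1 then 1 else 0
  | k + 1, a + 1 => fun j => Omega k a j - X (k + 1) * Omega (k + 1) a j
  termination_by k a => (a, k)

/-- `ω_k^a = Σ_{ℓ=1}^{k} (−1)^{a+k+ℓ} h_{a+ℓ−k}(x_ℓ,…,x_k) ω_ℓ`, with `h_j = 0` for `j < 0`. -/
theorem omega_expansion (k a : ℕ) (hk : 1 ≤ k) :
    Omega k a = fun j =>
      if 1 ≤ j ∧ j ≤ k ∧ k ≤ a + j then
        (-1 : MvPolynomial ℕ ℤ) ^ (a + k + j) * hpoly (Finset.Icc j k) (a + j - k)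
      else 0 := by
  induction a generalizing k with
  | zero =>
    cases k with
    | zero => omega
    | succ k' =>
      funext j
      simp only [Omega]
      split_ifs with h1 h2 h2
      · subst h1
        rw [show 0 + (k'+1) - (k'+1) = 0 from by omega, hpoly_zero,
          show 0 + (k'+1) + (k'+1) = 2*(k'+1) from by omega, pow_mul]
        simp
      · omega
      · omega
      · rfl
  | succ a ih =>
    cases k with
    | zero => omega
    | succ k' =>
      funext j
      simp only [Omega]
      rw [ih (k'+1) (by omega)]
      dsimp only
      rcases Nat.eq_zero_or_pos k' with rfl | hk'
      · simp only [Omega, Pi.zero_apply]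
        split_ifs with c1 c2 c2
        · have hj : j = 1 := by omega
          subst hj
          rw [Finset.Icc_self, hpoly_singleton, hpoly_singleton,
            show a + 1 - 1 = a from by omega, show a + 1 + 1 - 1 = a + 1 from by omega,
            show a + 1 + 1 + 1 = (a + 1 + 1) + 1 from rfl, pow_succ, pow_succ]
          ring
        · omega
        · omega
        · ring
      · rw [ih k' hk']
        dsimp only
        split_ifs with c1 c2 c3 c2 c3 c3
        · -- all conditions hold: k' ≤ a+j, k'+1 ≤ a+j
          rw [show a + j - k' = a + j - (k'+1) + 1 from by omega,
            show a + 1 + j - (k'+1) = a + j - (k'+1) + 1 from by omega,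
            hpoly_Icc_rec (by omega),
            show a + (k'+1) + j = a + k' + j + 1 from by omega,
            show a + 1 + (k'+1) + j = a + k' + j + 1 + 1 from by omega,
            pow_succ, pow_succ]
          ring
        · omega
        · -- c1, ¬c2 : degree zero case, a + j = k'
          rw [show a + j - k' = 0 from by omega,
            show a + 1 + j - (k'+1) = 0 from by omega, hpoly_zero, hpoly_zero,
            show a + 1 + (k'+1) + j = a + k' + j + 1 + 1 from by omega,
            pow_succ, pow_succ]
          ring
        · omega
        · -- ¬c1, c2 : j = k'+1
          have hj : j = k' + 1 := by omega
          subst hj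
          rw [Finset.Icc_self, hpoly_singleton, hpoly_singleton,
            show a + (k'+1) - (k'+1) = a from by omega,
            show a + 1 + (k'+1) - (k'+1) = a + 1 from by omega,
            show a + 1 + (k'+1) + (k'+1) = a + (k'+1) + (k'+1) + 1 from by omega,
            pow_succ, pow_succ]
          ring
        · omega
        · omega
        · ring
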